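/- arXiv:1210.5541 — 4 statements merged into one kernel-verified Lean document; each statement's English description precedes it below -/
import Mathlib

section
/- Let $\alpha, \beta > 0$ and $d_+ > s_-$. Define $A(x)$ and $B_c(x)$ as the explicit quadratic functions of the linear-supply-demand Bayesian Nash equilibrium (with $\gamma = \sqrt{\beta}/(\sqrt{\alpha}+\sqrt{\beta})$). Then for all $x$ in $(a_-, b_+)$, the pair $(A, B_c)$ satisfies the consistency equation $B_c(x)(d_+ - \beta B_c(x) - x) = A(x)(x - s_- - \alpha A(x))$. -/
/-- The explicit BNE distributions `A, B_c` satisfy the consistency equation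
`B_c(x)(d₊ - β B_c(x) - x) = A(x)(x - s₋ - α A(x))` on `(a₋, b₊)`. -/
theorem stmt9 (α β sm dp : ℝ) (hα : 0 < α) (hβ : 0 < β) (hsd : sm < dp)
    (γ : ℝ) (hγ : γ = Real.sqrt β / (Real.sqrt α + Real.sqrt β))
    (A Bc : ℝ → ℝ)
    (hA : ∀ x, A x =
      (-γ * α * (dp - x) + (2 - γ) * β * (x - sm)) / (2 * β * α * (dp - sm)) *
        (dp - sm + (α * (dp - x) + β * (x - sm)) / (2 * Real.sqrt (α * β))))
    (hBc : ∀ x, Bc x =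
      ((1 + γ) * α * (dp - x) - (1 - γ) * β * (x - sm)) / (2 * β * α * (dp - sm)) *
        (dp - sm + (α * (dp - x) + β * (x - sm)) / (2 * Real.sqrt (α * β))))
    (am bp : ℝ) (ham : am = sm + (1 - γ) ^ 2 * (dp - sm))
    (hbp : bp = dp - γ ^ 2 * (dp - sm))
    (x : ℝ) (hx : x ∈ Set.Ioo am bp) :
    Bc x * (dp - β * Bc x - x) = A x * (x - sm - α * A x) := by
  set sa := Real.sqrt α with hsa
  set sb := Real.sqrt β with hsb
  have hsa0 : 0 < sa := Real.sqrt_pos.mpr hα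
  have hsb0 : 0 < sb := Real.sqrt_pos.mpr hβ
  have hsa2 : sa ^ 2 = α := Real.sq_sqrt hα.le
  have hsb2 : sb ^ 2 = β := Real.sq_sqrt hβ.le
  have hab : Real.sqrt (α * β) = sa * sb := Real.sqrt_mul hα.le β
  have hds : dp - sm ≠ 0 := sub_ne_zero.mpr hsd.ne'
  have hsum : sa + sb ≠ 0 := by positivity
  rw [hA, hBc, hγ, hab, ← hsa2, ← hsb2]
  field_simp
  ring
end

section
/- Let $\alpha, \beta > 0$ and $d_+ > s_-$, with $A(x)$ and $B_c(x)$ the explicit BNE distributions for linear supply and demand. Then for all $x \in (a_-, b_+)$, the differential equation $2(d_+ - \beta B_c(x) - x)(-B_c'(x)A(x) + A'(x)B_c(x)) - A(x)(A(x) + B_c(x)) = 0$ holds. -/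
set_option maxHeartbeats 1000000

private lemma affineDeriv (a b x : ℝ) : HasDerivAt (fun y : ℝ => a + b * y) b x := by
  exact (((hasDerivAt_id x).const_mul b).const_add a).congr_deriv (mul_one b)

/-- The explicit BNE distributions `A, B_c` satisfy the first-order condition
`2(d₊ - β B_c - x)(-B_c' A + A' B_c) - A(A + B_c) = 0` on `(a₋, b₊)`. -/
theorem stmt10 (α β sm dp : ℝ) (hα : 0 < α) (hβ : 0 < β) (hsd : sm < dp)
    (γ : ℝ) (hγ : γ = Real.sqrt β / (Real.sqrt α + Real.sqrt β))
    (A Bc : ℝ → ℝ)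
    (hA : ∀ x, A x =
      (-γ * α * (dp - x) + (2 - γ) * β * (x - sm)) / (2 * β * α * (dp - sm)) *
        (dp - sm + (α * (dp - x) + β * (x - sm)) / (2 * Real.sqrt (α * β))))
    (hBc : ∀ x, Bc x =
      ((1 + γ) * α * (dp - x) - (1 - γ) * β * (x - sm)) / (2 * β * α * (dp - sm)) *
        (dp - sm + (α * (dp - x) + β * (x - sm)) / (2 * Real.sqrt (α * β))))
    (am bp : ℝ) (ham : am = sm + (1 - γ) ^ 2 * (dp - sm))
    (hbp : bp = dp - γ ^ 2 * (dp - sm))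
    (x : ℝ) (hx : x ∈ Set.Ioo am bp) :
    2 * (dp - β * Bc x - x) * (-(deriv Bc x) * A x + (deriv A x) * Bc x)
      - A x * (A x + Bc x) = 0 := by
  obtain ⟨s, hs0, rfl, hsrt⟩ : ∃ s : ℝ, 0 < s ∧ α = s ^ 2 ∧ Real.sqrt α = s :=
    ⟨Real.sqrt α, Real.sqrt_pos.2 hα, (Real.sq_sqrt hα.le).symm, rfl⟩
  obtain ⟨t, ht0, rfl, htrt⟩ : ∃ t : ℝ, 0 < t ∧ β = t ^ 2 ∧ Real.sqrt β = t :=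
    ⟨Real.sqrt β, Real.sqrt_pos.2 hβ, (Real.sq_sqrt hβ.le).symm, rfl⟩
  have hu : Real.sqrt (s ^ 2 * t ^ 2) = s * t := by
    rw [show s ^ 2 * t ^ 2 = (s * t) ^ 2 by ring]
    exact Real.sqrt_sq (by positivity)
  rw [hsrt, htrt] at hγ
  rw [hu] at hA hBc
  have hs' : s ≠ 0 := ne_of_gt hs0
  have ht' : t ≠ 0 := ne_of_gt ht0
  have hst : s + t ≠ 0 := by positivity
  have hd : dp - sm ≠ 0 := sub_ne_zero.2 (ne_of_gt hsd)
  set K := 2 * t ^ 2 * s ^ 2 * (dp - sm) with hK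
  have hK' : K ≠ 0 := by rw [hK]; positivity
  set p0 := (-γ * s ^ 2 * dp - (2 - γ) * t ^ 2 * sm) / K with hp0
  set p1 := (γ * s ^ 2 + (2 - γ) * t ^ 2) / K with hp1
  set r0 := ((1 + γ) * s ^ 2 * dp + (1 - γ) * t ^ 2 * sm) / K with hr0
  set r1 := (-(1 + γ) * s ^ 2 - (1 - γ) * t ^ 2) / K with hr1
  set q0 := (dp - sm) + (s ^ 2 * dp - t ^ 2 * sm) / (2 * (s * t)) with hq0
  set q1 := (t ^ 2 - s ^ 2) / (2 * (s * t)) with hq1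
  have hAfun : A = fun y => (p0 + p1 * y) * (q0 + q1 * y) := by
    funext y
    rw [hA y, hp0, hp1, hq0, hq1, hK]
    ring
  have hBfun : Bc = fun y => (r0 + r1 * y) * (q0 + q1 * y) := by
    funext y
    rw [hBc y, hr0, hr1, hq0, hq1, hK]
    ring
  have hdA : HasDerivAt A (p1 * (q0 + q1 * x) + (p0 + p1 * x) * q1) x := by
    rw [hAfun]
    exact (affineDeriv p0 p1 x).mul (affineDeriv q0 q1 x)
  have hdB : HasDerivAt Bc (r1 * (q0 + q1 * x) + (r0 + r1 * x) * q1) x := by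
    rw [hBfun]
    exact (affineDeriv r0 r1 x).mul (affineDeriv q0 q1 x)
  rw [hdA.deriv, hdB.deriv, hA x, hBc x]
  rw [show (-γ * (s^2) * (dp - x) + (2 - γ) * (t^2) * (x - sm)) / (2 * (t^2) * (s^2) * (dp - sm)) *
        (dp - sm + ((s^2) * (dp - x) + (t^2) * (x - sm)) / (2 * (s * t)))
      = (p0 + p1 * x) * (q0 + q1 * x) by rw [hp0, hp1, hq0, hq1, hK]; ring,
     show ((1 + γ) * (s^2) * (dp - x) - (1 - γ) * (t^2) * (x - sm)) / (2 * (t^2) * (s^2) * (dp - sm)) *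
        (dp - sm + ((s^2) * (dp - x) + (t^2) * (x - sm)) / (2 * (s * t)))
      = (r0 + r1 * x) * (q0 + q1 * x) by rw [hr0, hr1, hq0, hq1, hK]; ring]
  set AA := p0 + p1 * x with hAA
  set BB := r0 + r1 * x with hBB
  set Q := q0 + q1 * x with hQ
  set N := s ^ 2 * (dp - x) + t ^ 2 * (x - sm) with hNdef
  have key1 : p1 * BB - r1 * AA = 1 / K := by
    rw [hBB, hAA, hp0, hp1, hr0, hr1, hγ]
    field_simp
    ring
  have hNs : AA + BB = N / K := by
    rw [hBB, hAA, hp0, hp1, hr0, hr1, hNdef]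
    field_simp
    ring
  have key2 : 2 * (dp - x) - 2 * t ^ 2 * BB * Q - AA * N = 0 := by
    rw [hBB, hAA, hQ, hp0, hp1, hr0, hr1, hq0, hq1, hNdef, hK, hγ]
    field_simp
    ring
  linear_combination (2 * (dp - t ^ 2 * BB * Q - x) * Q ^ 2) * key1
    - (AA * Q ^ 2) * hNs + (Q ^ 2 / K) * key2
end

section
/- In the symmetric uniform case, the functions $a(m) = \frac{2}{3}m + \frac{1}{4}$ for $0 \le m \le \frac{3}{4}$ and $b(M) = \frac{2}{3}M + \frac{1}{12}$ for $\frac{1}{4} \le M \le 1$ satisfy: (i) $a(m) > m$ on $[0, 3/4)$ and $b(M) < M$ on $(1/4, 1]$; (ii) $a(3/4) = 3/4$ and $b(1/4) = 1/4$; (iii) the induced distributions $A(x) = S^{-1}(a^{-1}(x)) = \frac{3}{2}(x - \frac{1}{4})$ and $B_c(x) = D^{-1}(b^{-1}(x)) = \frac{3}{2}(\frac{3}{4} - x)$ for $x \in [1/4, 3/4]$ satisfy both $2(d_+ - \beta B_c - x)(-B_c'A + A'B_c) - A(A+B_c) = 0$ and $B_c(1 - B_c - x) = A(x - A)$ with $d_+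 = \beta = 1$. -/
/-- Symmetric uniform case (`S(x)=x`, `D(x)=1-x`): the strategies
`a(m) = 2m/3 + 1/4`, `b(M) = 2M/3 + 1/12` satisfy `a(m) > m`, `b(M) < M`,
`a(3/4) = 3/4`, `b(1/4) = 1/4`, the induced distributions
`A(x) = (3/2)(x - 1/4) = a⁻¹(x)`, `B_c(x) = (3/2)(3/4 - x) = 1 - b⁻¹(x)` satisfy
the first-order differential equation and the consistency equation (with
`d₊ = β = 1`). -/
theorem stmt14 (a b A Bc : ℝ → ℝ)
    (ha : ∀ m, a m = 2/3 * m + 1/4) (hb : ∀ M, b M = 2/3 * M + 1/12)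
    (hA : ∀ x, A x = 3/2 * (x - 1/4)) (hBc : ∀ x, Bc x = 3/2 * (3/4 - x)) :
    (∀ m ∈ Set.Ico (0:ℝ) (3/4), a m > m) ∧
    (∀ M ∈ Set.Ioc (1/4:ℝ) 1, b M < M) ∧
    a (3/4) = 3/4 ∧ b (1/4) = 1/4 ∧
    (∀ x ∈ Set.Icc (1/4:ℝ) (3/4), a (A x) = x) ∧
    (∀ x ∈ Set.Icc (1/4:ℝ) (3/4), b (1 - Bc x) = x) ∧
    (∀ x ∈ Set.Icc (1/4:ℝ) (3/4),
      2 * ((1:ℝ) - 1 * Bc x - x) * (-(deriv Bc x) * A x + (deriv A x) * Bc x)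
        - A x * (A x + Bc x) = 0) ∧
    (∀ x ∈ Set.Icc (1/4:ℝ) (3/4), Bc x * (1 - 1 * Bc x - x) = A x * (x - A x)) := by
  have hA' : ∀ x, deriv A x = 3/2 := by
    intro x
    have : A = fun x => 3/2 * x - 3/8 := by funext y; rw [hA]; ring
    rw [this]
    have := ((hasDerivAt_id x).const_mul (3/2:ℝ)).sub (hasDerivAt_const x (3/8:ℝ))
    simpa using this.deriv
  have hB' : ∀ x, deriv Bc x = -(3/2) := by
    intro x
    have : Bc = fun x => 9/8 - 3/2 * x := by funext y; rw [hBc]; ring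
    rw [this]
    have := (hasDerivAt_const x (9/8:ℝ)).sub ((hasDerivAt_id x).const_mul (3/2:ℝ))
    simpa using this.deriv
  refine ⟨fun m hm => by rw [ha]; linarith [hm.1, hm.2],
    fun M hM => by rw [hb]; linarith [hM.1, hM.2],
    by rw [ha]; norm_num, by rw [hb]; norm_num,
    fun x _ => by rw [ha, hA]; ring,
    fun x _ => by rw [hb, hBc]; ring,
    fun x _ => by rw [hA, hBc, hA', hB']; ring,
    fun x _ => by rw [hA, hBc]; ring⟩
end

section
/- Let $A, B_c : [a_-, b_+] \to \mathbb{R}$ be continuously differentiable with $A + B_c > 0$ on $[a_-, b_+]$, $A(a_-) = 0$, and $B_c(b_+) = 0$, and set $T = A/(A + B_c)$. Then $\int_{a_-}^{b_+} B_c'(q)\, T(q)^2\, dq = -\int_{a_-}^{b_+} A'(q)\,(1 - T(q))^2\, dq$. -/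
/-- Integration-by-parts identity: with `T = A/(A+B_c)`, `A(a₋)=0`, `B_c(b₊)=0`,
`∫ B_c' T² = -∫ A' (1-T)²`. -/
theorem stmt15 (am bp : ℝ) (hab : am ≤ bp) (A Bc A' Bc' : ℝ → ℝ)
    (hA : ∀ q ∈ Set.Icc am bp, HasDerivAt A (A' q) q)
    (hBc : ∀ q ∈ Set.Icc am bp, HasDerivAt Bc (Bc' q) q)
    (hA' : ContinuousOn A' (Set.Icc am bp))
    (hBc' : ContinuousOn Bc' (Set.Icc am bp))
    (hpos : ∀ q ∈ Set.Icc am bp, 0 < A q + Bc q)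
    (hA0 : A am = 0) (hB0 : Bc bp = 0) :
    ∫ q in am..bp, Bc' q * (A q / (A q + Bc q)) ^ 2
      = -∫ q in am..bp, A' q * (1 - A q / (A q + Bc q)) ^ 2 := by
  have hne : ∀ q ∈ Set.Icc am bp, A q + Bc q ≠ 0 := fun q hq => (hpos q hq).ne'
  have hcontA : ContinuousOn A (Set.Icc am bp) :=
    fun q hq => (hA q hq).continuousAt.continuousWithinAt
  have hcontB : ContinuousOn Bc (Set.Icc am bp) :=
    fun q hq => (hBc q hq).continuousAt.continuousWithinAt
  have hcontS : ContinuousOn (fun q => A q + Bc q) (Set.Icc am bp) := hcontA.add hcontB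
  have hcontT : ContinuousOn (fun q => A q / (A q + Bc q)) (Set.Icc am bp) :=
    hcontA.div hcontS hne
  set f : ℝ → ℝ := fun q => Bc' q * (A q / (A q + Bc q)) ^ 2 with hf
  set g : ℝ → ℝ := fun q => A' q * (1 - A q / (A q + Bc q)) ^ 2 with hg
  have hcontf : ContinuousOn f (Set.Icc am bp) := hBc'.mul (hcontT.pow 2)
  have hcontg : ContinuousOn g (Set.Icc am bp) :=
    hA'.mul (((continuousOn_const.sub hcontT)).pow 2)
  have hIf : IntervalIntegrable f MeasureTheory.volume am bp :=
    hcontf.intervalIntegrable_of_Icc hab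
  have hIg : IntervalIntegrable g MeasureTheory.volume am bp :=
    hcontg.intervalIntegrable_of_Icc hab
  set F : ℝ → ℝ := fun q => A q * Bc q / (A q + Bc q) with hF
  have hderiv : ∀ q ∈ Set.uIcc am bp, HasDerivAt F (f q + g q) q := by
    intro q hq
    rw [Set.uIcc_of_le hab] at hq
    have h1 := ((hA q hq).mul (hBc q hq)).div ((hA q hq).add (hBc q hq)) (hne q hq)
    convert h1 using 1
    · rfl
    · rfl
    · rfl
    have h0 := hne q hq
    simp only [hf, hg, Pi.add_apply, Pi.mul_apply]
    field_simp
    ring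
  have key : ∫ q in am..bp, (f q + g q) = F bp - F am :=
    intervalIntegral.integral_eq_sub_of_hasDerivAt hderiv (hIf.add hIg)
  rw [intervalIntegral.integral_add hIf hIg] at key
  have hFz : F bp - F am = 0 := by simp [hF, hA0, hB0]
  rw [hFz] at key
  linarith
end
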